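/- Every finitely generated virtually nilpotent group has polynomial growth: for every finite generating set S of such a group Γ there are a constant C > 0 and a non-negative integer d such that the number of elements of Γ of word length at most n with respect to S is at most C·n^d for every positive integer n. -/

import Mathlib

universe u

/-- A map between the vertex sets of two graphs (each vertex set carrying the combinatorial
metric `SimpleGraph.dist`) is a quasi-isometry. -/
def GraphQuasiIsometry {V : Type*} {V' : Type*} (G : SimpleGraph V) (G' : SimpleGraph V')
    (f : V → V') : Prop :=
  ∃ lam ε K : ℝ, 1 ≤ lam ∧ 0 ≤ ε ∧ 0 ≤ K ∧
    (∀ x y : V,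
      lam⁻¹ * (G.dist x y : ℝ) - ε ≤ (G'.dist (f x) (f y) : ℝ) ∧
      (G'.dist (f x) (f y) : ℝ) ≤ lam * (G.dist x y : ℝ) + ε) ∧
    (∀ v' : V', ∃ x : V, (G'.dist v' (f x) : ℝ) ≤ K)

/-- Two graphs are quasi-isometric (with their combinatorial metrics). -/
def QuasiIsometric {V V' : Type*} (G : SimpleGraph V) (G' : SimpleGraph V') : Prop :=
  ∃ f : V → V', GraphQuasiIsometry G G' f

/-- `G` has polynomial containment of degree at most `d`. -/
def HasPolyContainment {V : Type*} (G : SimpleGraph V) (d : ℕ) : Prop :=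
  ∃ C : ℝ, 0 < C ∧
    ∀ X₀ : Set V, X₀.Finite →
      ∃ (W : ℕ → Set V) (X : ℕ → Set V),
        X 0 = X₀ ∧
        (∀ n : ℕ, 1 ≤ n → (W n).Finite ∧ ((W n).ncard : ℝ) ≤ C * (n : ℝ) ^ d) ∧
        (∀ n : ℕ, X (n + 1) =
          {v : V | ∃ u ∈ X n, v = u ∨ G.Adj u v} \ (⋃ k ∈ Finset.Icc 1 (n + 1), W k)) ∧
        (∀ n : ℕ, Disjoint (X n) (W (n + 1))) ∧
        (∃ T : ℕ, 0 < T ∧ ∀ n : ℕ, T ≤ n → X n = X T)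

/-- `G` has all vertex degrees bounded above by some `D`. -/
def BoundedDegree {V : Type*} (G : SimpleGraph V) : Prop :=
  ∃ D : ℕ, ∀ v : V, (G.neighborSet v).Finite ∧ (G.neighborSet v).ncard ≤ D

/-- Number of vertices at distance at most `n` from the base vertex `g₀`. -/
noncomputable def growthFunction {V : Type*} (G : SimpleGraph V) (g₀ : V) (n : ℕ) : ℕ :=
  {v : V | G.dist g₀ v ≤ n}.ncard

/-- Edges of `G` with exactly one endpoint in `K`. -/
def edgeBoundary {V : Type*} (G : SimpleGraph V) (K : Set V) : Set (Sym2 V) :=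
  {e ∈ G.edgeSet | ∃ u v : V, e = s(u, v) ∧ u ∈ K ∧ v ∉ K}

/-- Cheeger constant of a graph. -/
noncomputable def cheegerConstant {V : Type*} (G : SimpleGraph V) : ℝ :=
  sInf {r : ℝ | ∃ K : Set V, K.Finite ∧ K.Nonempty ∧
    r = ((edgeBoundary G K).ncard : ℝ) / (K.ncard : ℝ)}

/-- Cayley graph of a group with respect to a set `S`. -/
def cayleyGraph (Γ : Type*) [Group Γ] (S : Set Γ) : SimpleGraph Γ :=
  SimpleGraph.fromRel (fun g h => ∃ s ∈ S, h = g * s)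

/-- Word length of `g` with respect to `S`. -/
noncomputable def wordLength {Γ : Type*} [Group Γ] (S : Set Γ) (g : Γ) : ℕ :=
  sInf {n : ℕ | ∃ l : List Γ, l.length = n ∧ (∀ x ∈ l, x ∈ S ∪ S⁻¹) ∧ l.prod = g}

def VirtuallyNilpotent (Γ : Type*) [Group Γ] : Prop :=
  ∃ H : Subgroup Γ, H.FiniteIndex ∧ Group.IsNilpotent H

/-- The infinite `δ`-regular tree. -/
def IsRegularTree {U : Type*} (T : SimpleGraph U) (δ : ℕ) : Prop :=
  Infinite U ∧ T.IsTree ∧ ∀ v : U, (T.neighborSet v).Finite ∧ (T.neighborSet v).ncard = δ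

/-- `a` and `b` generate a free semigroup of rank two. -/
def GeneratesFreeSemigroup {Γ : Type*} [Group Γ] (a b : Γ) : Prop :=
  Function.Injective
    (FreeSemigroup.lift (fun x : Bool => if x then a else b) : FreeSemigroup Bool →ₙ* Γ)

/-- Elementary amenable groups: the smallest class containing finite and abelian groups and
closed under subgroups, quotients, extensions and directed unions. -/
inductive ElementaryAmenable : (G : Type u) → [inst : Group G] → Prop
  | finite (G : Type u) [Group G] [Finite G] : ElementaryAmenable G
  | abelian (G : Type u) [Group G] (h : ∀ a b : G, a * b = b * a) : ElementaryAmenable G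
  | subgroup {G H : Type u} [Group G] [Group H] (f : H →* G) (hf : Function.Injective f)
      (hG : ElementaryAmenable G) : ElementaryAmenable H
  | quotient {G H : Type u} [Group G] [Group H] (f : G →* H) (hf : Function.Surjective f)
      (hG : ElementaryAmenable G) : ElementaryAmenable H
  | extension {G : Type u} [Group G] (N : Subgroup G) [N.Normal]
      (hN : ElementaryAmenable N) (hQ : ElementaryAmenable (G ⧸ N)) : ElementaryAmenable G
  | directedUnion {G : Type u} [Group G] {ι : Type u} (H : ι → Subgroup G)
      (hdir : ∀ i j, ∃ k, H i ≤ H k ∧ H j ≤ H k)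
      (hunion : ∀ g : G, ∃ i, g ∈ H i)
      (hEA : ∀ i, ElementaryAmenable (H i)) : ElementaryAmenable G

namespace WolfAux


open Subgroup List
open scoped commutatorElement

variable {G : Type u} [Group G]

def dd (a b : G) : G := a⁻¹ * b⁻¹ * a * b

lemma mul_eq_dd (a b : G) : a * b = b * a * dd a b := by
  simp only [dd]; group

lemma dd_mem {H K : Subgroup G} {a b : G} (ha : a ∈ H) (hb : b ∈ K) : dd a b ∈ ⁅H, K⁆ := by
  have h : dd a b = ⁅a⁻¹, b⁻¹⁆ := by
    simp [dd, commutatorElement_def]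
  rw [h]
  exact commutator_mem_commutator (inv_mem ha) (inv_mem hb)

lemma lcs_succ_comm (n : ℕ) :
    (⊤ : Subgroup G).lowerCentralSeries (n + 1) = ⁅(⊤ : Subgroup G).lowerCentralSeries n, (⊤ : Subgroup G)⁆ := by
  rw [Subgroup.lowerCentralSeries_succ]

section Machinery

variable {k : ℕ} (f : Fin k → G) (W : ℕ)

def lwt (t : Fin k × List (Fin k)) : ℕ := t.2.length + 1

def lval (t : Fin k × List (Fin k)) : G := t.2.foldl (fun g j => dd g (f j)) (f t.1)

lemma lval_concat (i : Fin k) (l : List (Fin k)) (x : Fin k) :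
    lval f (i, l ++ [x]) = dd (lval f (i, l)) (f x) := by
  simp [lval]

lemma lval_mem (t : Fin k × List (Fin k)) : lval f t ∈ (⊤ : Subgroup G).lowerCentralSeries t.2.length := by
  obtain ⟨i, l⟩ := t
  induction l using List.reverseRecOn with
  | nil => simp [lval, Subgroup.lowerCentralSeries_zero]
  | append_singleton l x ih =>
      rw [lval_concat]
      simp only [List.length_append, List.length_singleton]
      rw [lcs_succ_comm]
      exact dd_mem ih (mem_top _)

def prodF (l : List (Fin k)) : G := (l.map f).prod

def wprod (u : List (Fin k × List (Fin k))) : G := (u.map (lval f)).prod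

def pTE : List (Fin k) → Fin k × List (Fin k) → List (Fin k × List (Fin k))
  | [], t => if W < lwt t then [] else [t]
  | x :: L, t => if W < lwt t then [] else pTE L t ++ pTE L (t.1, t.2 ++ [x])

lemma pTE_drop (L : List (Fin k)) (t : Fin k × List (Fin k)) (h : W < lwt t) :
    pTE W L t = [] := by
  cases L <;> simp [pTE, h]

lemma pTE_spec (hdrop : ∀ t : Fin k × List (Fin k), W < lwt t → lval f t = 1)
    (L : List (Fin k)) (t : Fin k × List (Fin k)) :
    lval f t * prodF f L = prodF f L * wprod f (pTE W L t) := by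
  induction L generalizing t with
  | nil =>
      by_cases h : W < lwt t
      · simp [pTE, h, hdrop t h, prodF, wprod]
      · simp [pTE, h, prodF, wprod]
  | cons x L ih =>
      by_cases h : W < lwt t
      · simp [pTE, h, hdrop t h, wprod]
      · have h1 := ih t
        have h2 := ih (t.1, t.2 ++ [x])
        simp only [pTE, if_neg h, prodF, List.map_cons, List.prod_cons, wprod, List.map_append,
          List.prod_append] at *
        calc lval f t * (f x * (L.map f).prod)
            = (lval f t * f x) * (L.map f).prod := by rw [mul_assoc]
          _ = (f x * lval f t * dd (lval f t) (f x)) * (L.map f).prod := by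
              rw [← mul_eq_dd]
          _ = f x * (lval f t * (lval f (t.1, t.2 ++ [x]) * (L.map f).prod)) := by
              rw [lval_concat]; simp [mul_assoc]
          _ = f x * (lval f t * ((L.map f).prod * ((pTE W L (t.1, t.2 ++ [x])).map (lval f)).prod)) := by
              rw [h2]
          _ = f x * ((lval f t * (L.map f).prod) * ((pTE W L (t.1, t.2 ++ [x])).map (lval f)).prod) := by
              simp [mul_assoc]
          _ = f x * (((L.map f).prod * ((pTE W L t).map (lval f)).prod) * ((pTE W L (t.1, t.2 ++ [x])).map (lval f)).prod) := by
              rw [h1]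
          _ = f x * (L.map f).prod * (((pTE W L t).map (lval f)).prod * ((pTE W L (t.1, t.2 ++ [x])).map (lval f)).prod) := by
              simp [mul_assoc]

lemma pow_succ_helper (m a : ℕ) (ha : 1 ≤ a) :
    (m + 1) ^ a + (m + 1) ^ (a - 1) ≤ (m + 2) ^ a := by
  obtain ⟨b, rfl⟩ : ∃ b, a = b + 1 := ⟨a - 1, by omega⟩
  simp only [Nat.add_sub_cancel]
  calc (m + 1) ^ (b + 1) + (m + 1) ^ b = (m + 1) ^ b * (m + 2) := by rw [pow_succ]; ring
    _ ≤ (m + 2) ^ b * (m + 2) := Nat.mul_le_mul_right _ (Nat.pow_le_pow_left (by omega) b)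
    _ = (m + 2) ^ (b + 1) := (pow_succ _ _).symm

lemma pTE_len (L : List (Fin k)) (t : Fin k × List (Fin k)) :
    (pTE W L t).length ≤ (L.length + 1) ^ (W - lwt t) := by
  induction L generalizing t with
  | nil =>
      by_cases h : W < lwt t <;> simp [pTE, h]
  | cons x L ih =>
      by_cases h : W < lwt t
      · simp [pTE, h]
      · simp only [pTE, if_neg h, List.length_append, List.length_cons]
        rcases Nat.lt_or_ge (lwt t) W with hlt | hge
        · have h1 := ih t
          have h2 := ih (t.1, t.2 ++ [x])
          have hwt : lwt (t.1, t.2 ++ [x]) = lwt t + 1 := by simp [lwt]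
          rw [hwt] at h2
          have hsub : W - (lwt t + 1) = (W - lwt t) - 1 := by omega
          rw [hsub] at h2
          have h3 := pow_succ_helper L.length (W - lwt t) (by omega)
          simp only [show L.length + 1 + 1 = L.length + 2 from rfl]
          omega
        · have heq : lwt t = W := by omega
          have h1 := ih t
          have h2 : pTE W L (t.1, t.2 ++ [x]) = [] := by
            apply pTE_drop
            simp only [lwt, List.length_append, List.length_singleton]
            simp only [lwt] at heq
            omega
          rw [h2]
          simp only [List.length_nil, add_zero]
          have : W - lwt t = 0 := by omega
          rw [this] at h1 ⊢
          simpa using h1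

lemma pTE_wt (L : List (Fin k)) (t : Fin k × List (Fin k)) (h2 : 2 ≤ lwt t) :
    ∀ a ∈ pTE W L t, 2 ≤ lwt a ∧ lwt a ≤ W := by
  induction L generalizing t with
  | nil =>
      intro a ha
      by_cases h : W < lwt t
      · simp [pTE, h] at ha
      · simp [pTE, h] at ha
        subst ha; exact ⟨h2, not_lt.mp h⟩
  | cons x L ih =>
      intro a ha
      by_cases h : W < lwt t
      · simp [pTE, h] at ha
      · simp only [pTE, if_neg h, List.mem_append] at ha
        rcases ha with ha | ha
        · exact ih t h2 a ha
        · exact ih (t.1, t.2 ++ [x])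
            (by simp only [lwt, List.length_append, List.length_singleton]; omega) a ha

lemma wprod_append (u v : List (Fin k × List (Fin k))) :
    wprod f (u ++ v) = wprod f u * wprod f v := by
  simp [wprod]

lemma prodF_cons (j : Fin k) (l : List (Fin k)) :
    prodF f (j :: l) = f j * prodF f l := by
  simp [prodF]

lemma lval_single (j i : Fin k) : lval f (j, [i]) = dd (f j) (f i) := by
  simp [lval]

def ins (j : Fin k) : List (Fin k) → List (Fin k) × List (Fin k × List (Fin k))
  | [] => ([j], [])
  | i :: P => if j ≤ i then (j :: i :: P, []) else
      (i :: (ins j P).1, (ins j P).2 ++ pTE W P (j, [i]))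

lemma ins_spec (hdrop : ∀ t : Fin k × List (Fin k), W < lwt t → lval f t = 1)
    (j : Fin k) (P : List (Fin k)) :
    f j * prodF f P = prodF f (ins W j P).1 * wprod f (ins W j P).2 := by
  induction P with
  | nil => simp [ins, prodF, wprod]
  | cons i P ih =>
      by_cases h : j ≤ i
      · simp [ins, h, prodF, wprod]
      · simp only [ins, if_neg h]
        rw [prodF_cons, prodF_cons, wprod_append]
        calc f j * (f i * prodF f P)
            = (f j * f i) * prodF f P := by rw [mul_assoc]
          _ = (f i * f j * dd (f j) (f i)) * prodF f P := by rw [← mul_eq_dd]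
          _ = f i * (f j * (lval f (j, [i]) * prodF f P)) := by
              rw [lval_single]; simp [mul_assoc]
          _ = f i * (f j * (prodF f P * wprod f (pTE W P (j, [i])))) := by
              rw [pTE_spec f W hdrop]
          _ = f i * ((f j * prodF f P) * wprod f (pTE W P (j, [i]))) := by
              simp [mul_assoc]
          _ = f i * ((prodF f (ins W j P).1 * wprod f (ins W j P).2) *
                wprod f (pTE W P (j, [i]))) := by rw [ih]
          _ = f i * prodF f (ins W j P).1 *
                (wprod f (ins W j P).2 * wprod f (pTE W P (j, [i]))) := by
              simp [mul_assoc]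

lemma ins_fst (j : Fin k) (P : List (Fin k)) :
    (ins W j P).1 = P.orderedInsert (· ≤ ·) j := by
  induction P with
  | nil => rfl
  | cons i P ih =>
      simp only [ins, List.orderedInsert]
      split_ifs <;> simp [ih]

lemma ins_fst_len (j : Fin k) (P : List (Fin k)) :
    (ins W j P).1.length = P.length + 1 := by
  rw [ins_fst, List.orderedInsert_length]

lemma ins_fst_sorted (j : Fin k) (P : List (Fin k)) (hP : P.Pairwise (· ≤ ·)) :
    (ins W j P).1.Pairwise (· ≤ ·) := by
  rw [ins_fst]
  exact hP.orderedInsert j P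

lemma ins_len2 (j : Fin k) (P : List (Fin k)) :
    (ins W j P).2.length ≤ P.length * (P.length + 1) ^ W := by
  induction P with
  | nil => simp [ins]
  | cons i P ih =>
      by_cases h : j ≤ i
      · simp [ins, h]
      · simp only [ins, if_neg h, List.length_append, List.length_cons]
        have e2 := pTE_len W P (j, [i])
        have e3 : (P.length + 1) ^ (W - lwt (j, [i])) ≤ (P.length + 1) ^ W :=
          Nat.pow_le_pow_right (by omega) (by omega)
        have e4 : (P.length + 1) ^ W ≤ (P.length + 2) ^ W :=
          Nat.pow_le_pow_left (by omega) W
        have e5 : P.length * (P.length + 1) ^ W ≤ P.length * (P.length + 2) ^ W :=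
          Nat.mul_le_mul_left _ e4
        simp only [show P.length + 1 + 1 = P.length + 2 from rfl]
        calc (ins W j P).2.length + (pTE W P (j, [i])).length
            ≤ P.length * (P.length + 1) ^ W + (P.length + 1) ^ W := by omega
          _ ≤ P.length * (P.length + 2) ^ W + (P.length + 2) ^ W := by omega
          _ = (P.length + 1) * (P.length + 2) ^ W := by ring

lemma ins_wt (j : Fin k) (P : List (Fin k)) :
    ∀ a ∈ (ins W j P).2, 2 ≤ lwt a ∧ lwt a ≤ W := by
  induction P with
  | nil => simp [ins]
  | cons i P ih =>
      intro a ha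
      by_cases h : j ≤ i
      · simp [ins, h] at ha
      · simp only [ins, if_neg h, List.mem_append] at ha
        rcases ha with ha | ha
        · exact ih a ha
        · exact pTE_wt W P (j, [i]) (by simp [lwt]) a ha

def coll : List (Fin k) → List (Fin k) × List (Fin k × List (Fin k))
  | [] => ([], [])
  | j :: w => ((ins W j (coll w).1).1, (ins W j (coll w).1).2 ++ (coll w).2)

lemma coll_spec (hdrop : ∀ t : Fin k × List (Fin k), W < lwt t → lval f t = 1)
    (l : List (Fin k)) :
    prodF f l = prodF f (coll W l).1 * wprod f (coll W l).2 := by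
  induction l with
  | nil => simp [coll, prodF, wprod]
  | cons j w ih =>
      simp only [coll, wprod_append]
      rw [prodF_cons, ih, ← mul_assoc, ins_spec f W hdrop j (coll W w).1, mul_assoc]

lemma coll_len1 (l : List (Fin k)) : (coll W l).1.length = l.length := by
  induction l with
  | nil => rfl
  | cons j w ih => simp [coll, ins_fst_len, ih]

lemma coll_sorted (l : List (Fin k)) : (coll W l).1.Pairwise (· ≤ ·) := by
  induction l with
  | nil => simp [coll]
  | cons j w ih => exact ins_fst_sorted W j _ ih

lemma coll_len2 (l : List (Fin k)) :
    (coll W l).2.length ≤ l.length * l.length * (l.length + 1) ^ W := by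
  induction l with
  | nil => simp [coll]
  | cons j w ih =>
      simp only [coll, List.length_append, List.length_cons]
      have e1 := ins_len2 W j (coll W w).1
      rw [coll_len1] at e1
      set n := w.length with hn
      have e4 : (n + 1) ^ W ≤ (n + 2) ^ W := Nat.pow_le_pow_left (by omega) W
      simp only [show n + 1 + 1 = n + 2 from rfl]
      calc (ins W j (coll W w).1).2.length + (coll W w).2.length
          ≤ n * (n + 1) ^ W + n * n * (n + 1) ^ W := by omega
        _ = (n * n + n) * (n + 1) ^ W := by ring
        _ ≤ (n * n + n) * (n + 2) ^ W := Nat.mul_le_mul_left _ e4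
        _ ≤ ((n + 1) * (n + 1)) * (n + 2) ^ W := by
            have : n * n + n ≤ (n + 1) * (n + 1) := by nlinarith
            exact Nat.mul_le_mul_right _ this
        _ = (n + 1) * (n + 1) * (n + 2) ^ W := by ring

lemma coll_wt (l : List (Fin k)) :
    ∀ a ∈ (coll W l).2, 2 ≤ lwt a ∧ lwt a ≤ W := by
  induction l with
  | nil => simp [coll]
  | cons j w ih =>
      intro a ha
      simp only [coll, List.mem_append] at ha
      rcases ha with ha | ha
      · exact ins_wt W j (coll W w).1 a ha
      · exact ih a ha

end Machinery

section Counting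

lemma finite_length_le (k n : ℕ) : {l : List (Fin k) | l.length ≤ n}.Finite := by
  induction n with
  | zero =>
      apply Set.Finite.subset (Set.finite_singleton ([] : List (Fin k)))
      intro l hl
      simp only [Set.mem_setOf_eq, Nat.le_zero] at hl
      simp [List.length_eq_zero_iff.mp hl]
  | succ n ih =>
      apply Set.Finite.subset
        (Set.Finite.insert [] (Set.Finite.image2 (fun x l => x :: l) (Set.finite_univ) ih))
      intro l hl
      cases l with
      | nil => simp
      | cons x l' =>
          simp only [Set.mem_setOf_eq, List.length_cons, Nat.add_le_add_iff_right] at hl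
          exact Set.mem_insert_iff.mpr (Or.inr (Set.mem_image2_of_mem (Set.mem_univ x) hl))

lemma sorted_ncard (k n : ℕ) :
    ({l : List (Fin k) | l.Pairwise (· ≤ ·) ∧ l.length ≤ n}).ncard ≤ (n + 1) ^ k := by
  classical
  set s := {l : List (Fin k) | l.Pairwise (· ≤ ·) ∧ l.length ≤ n} with hs
  set φ : List (Fin k) → (Fin k → Fin (n + 1)) :=
    fun l i => (⟨min (l.count i) n, by omega⟩ : Fin (n + 1)) with hφdef
  have hφ : Set.InjOn φ s := by
    intro l1 h1 l2 h2 he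
    have hc : ∀ i : Fin k, l1.count i = l2.count i := by
      intro i
      have h := congrFun he i
      simp only [hφdef, Fin.mk.injEq] at h
      have c1 : l1.count i ≤ n := le_trans List.count_le_length h1.2
      have c2 : l2.count i ≤ n := le_trans List.count_le_length h2.2
      omega
    exact List.Perm.eq_of_pairwise' h1.1 h2.1 (List.perm_iff_count.mpr hc)
  calc s.ncard = (φ '' s).ncard := (Set.ncard_image_of_injOn hφ).symm
    _ ≤ (Set.univ : Set (Fin k → Fin (n + 1))).ncard :=
        Set.ncard_le_ncard (Set.subset_univ _) Set.finite_univ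
    _ = (n + 1) ^ k := by
        rw [Set.ncard_univ]
        simp [Nat.card_eq_fintype_card]

lemma ncard_sprod {α β : Type*} (A : Set α) (B : Set β) :
    (A ×ˢ B).ncard = A.ncard * B.ncard := by
  rw [← Nat.card_coe_set_eq, ← Nat.card_coe_set_eq, ← Nat.card_coe_set_eq,
    Nat.card_congr (Equiv.Set.prod A B), Nat.card_prod]

variable {G : Type u} [Group G] {k : ℕ}

def ballSet (f : Fin k → G) (n : ℕ) : Set G := prodF f '' {l | l.length ≤ n}

lemma ballSet_finite (f : Fin k → G) (n : ℕ) : (ballSet f n).Finite :=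
  (finite_length_le k n).image _

lemma ballSet_mono (f : Fin k → G) {n m : ℕ} (h : n ≤ m) : ballSet f n ⊆ ballSet f m :=
  Set.image_mono (fun l hl => le_trans hl h)

lemma exists_word_in_subgroup (H : Subgroup G) {m : ℕ} (fT : Fin m → ↥H) (T : Set G)
    (hsurj : ∀ g ∈ T, ∃ i, ((fT i : ↥H) : G) = g) :
    ∀ l : List G, (∀ x ∈ l, x ∈ T) →
      ∃ z : ↥H, (z : G) = l.prod ∧ z ∈ ballSet fT l.length := by
  intro l
  induction l with
  | nil =>
      intro _
      exact ⟨1, by simp, ⟨[], by simp, by simp [prodF]⟩⟩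
  | cons a l ih =>
      intro hl
      obtain ⟨ha, hl'⟩ := List.forall_mem_cons.mp hl
      obtain ⟨z, hz1, hz2⟩ := ih hl'
      obtain ⟨i, hi⟩ := hsurj a ha
      obtain ⟨lw, hlw, hlp⟩ := hz2
      refine ⟨fT i * z, ?_, ⟨i :: lw, ?_, ?_⟩⟩
      · push_cast
        rw [hz1, hi, List.prod_cons]
      · simpa using hlw
      · rw [prodF_cons, hlp]

def Tw (f : Fin k → G) : ℕ → Set G
  | 0 => Set.range f
  | w + 1 => Set.image2 dd (Tw f w) (Set.range f)

lemma Tw_finite (f : Fin k → G) (w : ℕ) : (Tw f w).Finite := by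
  induction w with
  | zero => exact Set.finite_range f
  | succ w ih => exact Set.Finite.image2 _ ih (Set.finite_range f)

lemma lval_mem_Tw (f : Fin k → G) (i : Fin k) (l : List (Fin k)) :
    lval f (i, l) ∈ Tw f l.length := by
  induction l using List.reverseRecOn with
  | nil => exact Set.mem_range_self i
  | append_singleton l x ih =>
      rw [lval_concat]
      simp only [List.length_append, List.length_singleton]
      exact Set.mem_image2_of_mem ih (Set.mem_range_self x)

lemma Tw_sub_lcs (f : Fin k → G) (w : ℕ) :
    Tw f w ⊆ ((⊤ : Subgroup G).lowerCentralSeries w : Subgroup G) := by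
  induction w with
  | zero => intro x _; simp [Subgroup.lowerCentralSeries_zero]
  | succ w ih =>
      intro x hx
      obtain ⟨a, ha, b, _, rfl⟩ := hx
      rw [lcs_succ_comm]
      exact dd_mem (ih ha) (Subgroup.mem_top b)

end Counting

theorem poly_ball :
    ∀ (c : ℕ) {G : Type u} [Group G] {k : ℕ} (f : Fin k → G),
      (⊤ : Subgroup G).lowerCentralSeries c = ⊥ →
      ∃ C d : ℕ, 0 < C ∧ ∀ n : ℕ, 1 ≤ n → (ballSet f n).ncard ≤ C * n ^ d := by
  intro c
  induction c with
  | zero =>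
      intro G _ k f hbot
      refine ⟨1, 0, one_pos, fun n _ => ?_⟩
      have hsub : ballSet f n ⊆ {1} := by
        intro g _
        have hg : g ∈ (⊥ : Subgroup G) := by
          rw [← hbot]
          exact Subgroup.mem_top g
        simpa using hg
      calc (ballSet f n).ncard ≤ ({1} : Set G).ncard :=
            Set.ncard_le_ncard hsub (Set.finite_singleton _)
        _ ≤ 1 * n ^ 0 := by simp [Set.ncard_singleton]
  | succ c IH =>
      intro G _ k f hbot
      set W := c + 1 with hW
      have hdrop : ∀ t : Fin k × List (Fin k), W < lwt t → lval f t = 1 := by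
        intro t ht
        have h1 := lval_mem f t
        have h2 : (⊤ : Subgroup G).lowerCentralSeries t.2.length ≤ (⊤ : Subgroup G).lowerCentralSeries (c + 1) :=
          Subgroup.lowerCentralSeries_antitone ⊤ (by simp only [lwt, hW] at ht ⊢; omega)
        rw [hbot] at h2
        simpa using h2 h1
      set T : Set G := ⋃ w ∈ Finset.Icc 1 W, Tw f w with hT
      have hTfin : T.Finite :=
        Set.Finite.biUnion (Finset.Icc 1 W).finite_toSet (fun w _ => Tw_finite f w)
      set H := Subgroup.closure T with hH
      have hTsub : ∀ g ∈ T, g ∈ (⊤ : Subgroup G).lowerCentralSeries 1 := by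
        intro g hg
        rw [hT] at hg
        simp only [Set.mem_iUnion, Finset.mem_Icc, exists_prop] at hg
        obtain ⟨w, ⟨hw1, _⟩, hgw⟩ := hg
        exact Subgroup.lowerCentralSeries_antitone ⊤ hw1 (Tw_sub_lcs f w hgw)
      have hHle : H ≤ (⊤ : Subgroup G).lowerCentralSeries 1 := (Subgroup.closure_le _).mpr hTsub
      have hmap : ∀ i, Subgroup.map H.subtype ((⊤ : Subgroup ↥H).lowerCentralSeries i) ≤
          (⊤ : Subgroup G).lowerCentralSeries (i + 1) := by
        intro i
        induction i with
        | zero =>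
            rw [Subgroup.lowerCentralSeries_zero, ← MonoidHom.range_eq_map, Subgroup.range_subtype]
            exact hHle
        | succ i ih =>
            rw [lcs_succ_comm, Subgroup.map_commutator, lcs_succ_comm]
            exact Subgroup.commutator_mono ih le_top
      have hlcsH : (⊤ : Subgroup ↥H).lowerCentralSeries c = ⊥ := by
        rw [eq_bot_iff]
        intro x hx
        have hx2 : H.subtype x ∈ (⊤ : Subgroup G).lowerCentralSeries (c + 1) :=
          hmap c (Subgroup.mem_map_of_mem _ hx)
        rw [hbot, Subgroup.mem_bot] at hx2
        simp only [Subgroup.mem_bot]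
        exact Subtype.ext hx2
      obtain ⟨m, fT0, hrange⟩ := hTfin.fin_param
      have hmem0 : ∀ i, fT0 i ∈ H := by
        intro i
        exact Subgroup.subset_closure (by rw [← hrange.2]; exact Set.mem_range_self i)
      set fT : Fin m → ↥H := fun i => ⟨fT0 i, hmem0 i⟩ with hfTdef
      have hfT : ∀ g ∈ T, ∃ i, ((fT i : ↥H) : G) = g := by
        intro g hg
        rw [← hrange.2] at hg
        obtain ⟨i, rfl⟩ := hg
        exact ⟨i, rfl⟩
      obtain ⟨C, d, hC, hball⟩ := IH fT hlcsH
      refine ⟨2 ^ k * C * 2 ^ (W * d), k + (W + 2) * d, by positivity, fun n hn => ?_⟩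
      set M := n * n * (n + 1) ^ W with hM
      have hM1 : 1 ≤ M := by
        have : 0 < M := by
          apply Nat.mul_pos (Nat.mul_pos hn hn)
          exact Nat.pow_pos (by omega)
        omega
      set SL := {l : List (Fin k) | l.Pairwise (· ≤ ·) ∧ l.length ≤ n} with hSL
      set A := prodF f '' SL with hA
      set B := ((↑) : ↥H → G) '' (ballSet fT M) with hB
      have hSLfin : SL.Finite :=
        Set.Finite.subset (finite_length_le k n) (fun l hl => hl.2)
      have hAfin : A.Finite := hSLfin.image _
      have hBfin : B.Finite := (ballSet_finite fT M).image _
      have hcover : ballSet f n ⊆ (fun p : G × G => p.1 * p.2) '' (A ×ˢ B) := by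
        intro g hg
        obtain ⟨l, hlen, rfl⟩ := hg
        simp only [Set.mem_setOf_eq] at hlen
        have hspec := coll_spec f W hdrop l
        have hvals : ∀ x ∈ (coll W l).2.map (lval f), x ∈ T := by
          intro x hx
          obtain ⟨a, ha, rfl⟩ := List.mem_map.mp hx
          have hw := coll_wt W l a ha
          have hmem := lval_mem_Tw f a.1 a.2
          rw [hT]
          simp only [Set.mem_iUnion, Finset.mem_Icc, exists_prop]
          refine ⟨a.2.length, ⟨?_, ?_⟩, ?_⟩
          · simp only [lwt] at hw; omega
          · simp only [lwt] at hw; omega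
          · exact hmem
        obtain ⟨z, hz1, hz2⟩ :=
          exists_word_in_subgroup H fT T hfT ((coll W l).2.map (lval f)) hvals
        have hzball : z ∈ ballSet fT M := by
          apply ballSet_mono fT _ hz2
          rw [List.length_map]
          calc (coll W l).2.length ≤ l.length * l.length * (l.length + 1) ^ W :=
                coll_len2 W l
            _ ≤ M := by
                rw [hM]
                have h1 : l.length ≤ n := hlen
                exact Nat.mul_le_mul (Nat.mul_le_mul h1 h1)
                  (Nat.pow_le_pow_left (by omega) W)
        refine ⟨(prodF f (coll W l).1, (z : G)), ⟨⟨(coll W l).1, ⟨?_, ?_⟩, rfl⟩, ⟨z, hzball, rfl⟩⟩, ?_⟩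
        · exact coll_sorted W l
        · rw [coll_len1]; exact hlen
        · simp only
          rw [hz1, hspec]
          rfl
      calc (ballSet f n).ncard
          ≤ ((fun p : G × G => p.1 * p.2) '' (A ×ˢ B)).ncard :=
            Set.ncard_le_ncard hcover ((hAfin.prod hBfin).image _)
        _ ≤ (A ×ˢ B).ncard := Set.ncard_image_le (hAfin.prod hBfin)
        _ = A.ncard * B.ncard := ncard_sprod A B
        _ ≤ (n + 1) ^ k * (C * M ^ d) := by
            apply Nat.mul_le_mul
            · exact le_trans (Set.ncard_image_le hSLfin) (sorted_ncard k n)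
            · exact le_trans (Set.ncard_image_le (ballSet_finite fT M)) (hball M hM1)
        _ ≤ (2 ^ k * n ^ k) * (C * (2 ^ W * n ^ (W + 2)) ^ d) := by
            apply Nat.mul_le_mul
            · calc (n + 1) ^ k ≤ (2 * n) ^ k := Nat.pow_le_pow_left (by omega) k
                _ = 2 ^ k * n ^ k := mul_pow 2 n k
            · apply Nat.mul_le_mul_left
              apply Nat.pow_le_pow_left
              calc M = n * n * (n + 1) ^ W := hM
                _ ≤ n * n * (2 * n) ^ W :=
                    Nat.mul_le_mul_left _ (Nat.pow_le_pow_left (by omega) W)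
                _ = 2 ^ W * n ^ (W + 2) := by rw [mul_pow]; ring
        _ = 2 ^ k * C * 2 ^ (W * d) * n ^ (k + (W + 2) * d) := by
            rw [mul_pow, ← pow_mul, ← pow_mul, pow_add]
            ring

end WolfAux

/-- Wolf: every finitely generated virtually nilpotent group has polynomial
growth with respect to every finite generating set. -/
theorem virtuallyNilpotent_polynomial_growth (Γ : Type u) [Group Γ]
    (hvn : VirtuallyNilpotent Γ)
    (S : Set Γ) (hS : S.Finite) (hgen : Subgroup.closure S = ⊤) :
    ∃ (C : ℝ) (d : ℕ), 0 < C ∧ ∀ n : ℕ, 1 ≤ n →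
      (({g : Γ | wordLength S g ≤ n}.ncard : ℝ) ≤ C * (n : ℝ) ^ d) := by
  classical
  obtain ⟨H₀, hfin, hnil⟩ := hvn
  haveI := hfin
  set N := H₀.normalCore with hNdef
  haveI : Group.IsNilpotent ↥H₀ := hnil
  haveI : Group.IsNilpotent ↥(N.subgroupOf H₀) := Subgroup.isNilpotent _
  haveI hNnil : Group.IsNilpotent ↥N :=
    (Group.isNilpotent_congr (Subgroup.subgroupOfEquivOfLe H₀.normalCore_le)).mp this
  obtain ⟨cN, hcN⟩ := nilpotent_iff_lowerCentralSeries.mp hNnil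
  set σ : Γ ⧸ N → Γ := fun q => if q = 1 then 1 else q.out with hσdef
  set ρ : Γ → Γ := fun x => σ (QuotientGroup.mk x) with hρdef
  have hmkσ : ∀ q : Γ ⧸ N, (QuotientGroup.mk (σ q) : Γ ⧸ N) = q := by
    intro q
    by_cases h : q = 1
    · simp [hσdef, h]
    · simp [hσdef, h, QuotientGroup.out_eq']
  have hρmk : ∀ x : Γ, (QuotientGroup.mk (ρ x) : Γ ⧸ N) = QuotientGroup.mk x :=
    fun x => hmkσ _
  have hρ1 : ρ 1 = 1 := by
    simp [hρdef, hσdef, QuotientGroup.eq_one_iff, Subgroup.one_mem]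
  set Sym := S ∪ S⁻¹ with hSymdef
  have hSymfin : Sym.Finite := hS.union hS.inv
  set U : Set Γ := (fun p : (Γ ⧸ N) × Γ => σ p.1 * p.2 * (ρ (σ p.1 * p.2))⁻¹) ''
      (Set.univ ×ˢ Sym) with hUdef
  have hUfin : U.Finite := (Set.finite_univ.prod hSymfin).image _
  have hUN : ∀ u ∈ U, u ∈ N := by
    intro u hu
    obtain ⟨⟨q, s⟩, -, rfl⟩ := hu
    rw [← QuotientGroup.eq_one_iff]
    rw [QuotientGroup.mk_mul, QuotientGroup.mk_inv, hρmk]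
    group
  have hword : ∀ l : List Γ, (∀ x ∈ l, x ∈ Sym) →
      ∃ w : List Γ, w.length = l.length ∧ (∀ x ∈ w, x ∈ U) ∧
        w.prod = l.prod * (ρ l.prod)⁻¹ := by
    intro l
    induction l using List.reverseRecOn with
    | nil =>
        intro _
        exact ⟨[], rfl, by simp, by simp [hρ1]⟩
    | append_singleton l s ih =>
        intro hl
        have hl' : ∀ x ∈ l, x ∈ Sym := fun x hx => hl x (List.mem_append_left _ hx)
        have hs : s ∈ Sym := hl s (List.mem_append_right _ (List.mem_singleton_self s))
        obtain ⟨w, hwl, hwU, hwp⟩ := ih hl'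
        have hrr : ρ (ρ l.prod * s) = ρ (l.prod * s) := by
          simp only [hρdef]
          congr 1
          rw [QuotientGroup.mk_mul, QuotientGroup.mk_mul]
          congr 1
          exact hmkσ _
        refine ⟨w ++ [ρ l.prod * s * (ρ (l.prod * s))⁻¹], by simp [hwl], ?_, ?_⟩
        · intro x hx
          rcases List.mem_append.mp hx with hx | hx
          · exact hwU x hx
          · rw [List.mem_singleton] at hx
            subst hx
            refine ⟨(QuotientGroup.mk l.prod, s), by simp [hs], ?_⟩
            show σ (QuotientGroup.mk l.prod) * s *
                (ρ (σ (QuotientGroup.mk l.prod) * s))⁻¹ = _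
            have hσρ : σ (QuotientGroup.mk l.prod) = ρ l.prod := rfl
            rw [hσρ, hrr]
        · simp only [List.prod_append, List.prod_singleton]
          rw [hwp]
          group
  obtain ⟨mU, fU0, hUparam⟩ := hUfin.fin_param
  have hmemU0 : ∀ i, fU0 i ∈ N :=
    fun i => hUN _ (by rw [← hUparam.2]; exact Set.mem_range_self i)
  set fU : Fin mU → ↥N := fun i => ⟨fU0 i, hmemU0 i⟩ with hfUdef
  have hfU : ∀ g ∈ U, ∃ i, ((fU i : ↥N) : Γ) = g := by
    intro g hg
    rw [← hUparam.2] at hg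
    obtain ⟨i, rfl⟩ := hg
    exact ⟨i, rfl⟩
  obtain ⟨C0, d, hC0, hball⟩ := WolfAux.poly_ball cN fU hcN
  set K := Nat.card (Γ ⧸ N) with hKdef
  have hK : 0 < K := Nat.card_pos
  refine ⟨((C0 * K : ℕ) : ℝ), d, by exact_mod_cast Nat.mul_pos hC0 hK, fun n hn => ?_⟩
  have hσfin : (Set.range σ).Finite := Set.finite_range σ
  have hfinB : (((↑) : ↥N → Γ) '' WolfAux.ballSet fU n).Finite :=
    (WolfAux.ballSet_finite fU n).image _
  have hcover : {g : Γ | wordLength S g ≤ n} ⊆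
      (fun p : Γ × Γ => p.1 * p.2) ''
        ((((↑) : ↥N → Γ) '' WolfAux.ballSet fU n) ×ˢ Set.range σ) := by
    intro g hg
    simp only [Set.mem_setOf_eq] at hg
    have hgT : g ∈ Submonoid.closure (S ∪ S⁻¹) := by
      have h1 : g ∈ Subgroup.closure S := by rw [hgen]; exact Subgroup.mem_top g
      rw [← Subgroup.mem_toSubmonoid, Subgroup.closure_toSubmonoid] at h1
      exact h1
    obtain ⟨l0, hl0, hp0⟩ := Submonoid.exists_list_of_mem_closure hgT
    have hne : {m | ∃ l : List Γ, l.length = m ∧ (∀ x ∈ l, x ∈ S ∪ S⁻¹) ∧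
        l.prod = g}.Nonempty := ⟨l0.length, l0, rfl, hl0, hp0⟩
    obtain ⟨l, hlen, hmem, hprod⟩ := Nat.sInf_mem hne
    have hg' : sInf {m | ∃ l : List Γ, l.length = m ∧ (∀ x ∈ l, x ∈ S ∪ S⁻¹) ∧
        l.prod = g} ≤ n := hg
    have hlln : l.length ≤ n := by rw [hlen]; exact hg'
    obtain ⟨w, hwl, hwU, hwp⟩ := hword l hmem
    obtain ⟨z, hz1, hz2⟩ := WolfAux.exists_word_in_subgroup N fU U hfU w hwU
    refine ⟨((z : Γ), σ (QuotientGroup.mk g)),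
      ⟨⟨z, WolfAux.ballSet_mono fU (by rw [hwl]; exact hlln) hz2, rfl⟩,
        Set.mem_range_self _⟩, ?_⟩
    show (z : Γ) * σ (QuotientGroup.mk g) = g
    rw [hz1, hwp, hprod]
    have : σ (QuotientGroup.mk g) = ρ g := rfl
    rw [this]
    group
  have hRcard : (Set.range σ).ncard ≤ K := by
    calc (Set.range σ).ncard = (σ '' Set.univ).ncard := by rw [Set.image_univ]
      _ ≤ (Set.univ : Set (Γ ⧸ N)).ncard := Set.ncard_image_le Set.finite_univ
      _ = K := Set.ncard_univ _
  have hfinal : ({g : Γ | wordLength S g ≤ n}).ncard ≤ (C0 * n ^ d) * K := by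
    calc ({g : Γ | wordLength S g ≤ n}).ncard
        ≤ ((fun p : Γ × Γ => p.1 * p.2) ''
            ((((↑) : ↥N → Γ) '' WolfAux.ballSet fU n) ×ˢ Set.range σ)).ncard :=
          Set.ncard_le_ncard hcover ((hfinB.prod hσfin).image _)
      _ ≤ (((((↑) : ↥N → Γ) '' WolfAux.ballSet fU n)) ×ˢ Set.range σ).ncard :=
          Set.ncard_image_le (hfinB.prod hσfin)
      _ = ((((↑) : ↥N → Γ) '' WolfAux.ballSet fU n)).ncard * (Set.range σ).ncard :=
          WolfAux.ncard_sprod _ _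
      _ ≤ (C0 * n ^ d) * K :=
          Nat.mul_le_mul
            (le_trans (Set.ncard_image_le (WolfAux.ballSet_finite fU n)) (hball n hn))
            hRcard
  have h2 : (({g : Γ | wordLength S g ≤ n}.ncard : ℕ) : ℝ) ≤
      ((C0 * n ^ d * K : ℕ) : ℝ) := Nat.cast_le.mpr hfinal
  push_cast at h2 ⊢
  calc ({g : Γ | wordLength S g ≤ n}.ncard : ℝ) ≤ C0 * (n : ℝ) ^ d * K := h2
    _ = C0 * K * (n : ℝ) ^ d := by ring
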